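/- For every natural number ℓ, the unary language P_ℓ = { a^(ℓ^n) : n ≥ 0 } over the one-letter alphabet {a} is recognised by some total parsing expression grammar; that is, P_ℓ ∈ PEG. -/

import Mathlib

/-! ## Parsing expression grammars -/

/-- Parsing expressions over terminal alphabet `α` and non-terminal alphabet `ν`. -/
inductive PExp (α : Type) (ν : Type) : Type where
  | eps : PExp α ν
  | fail : PExp α ν
  | term (a : α) : PExp α ν
  | nt (A : ν) : PExp α ν
  | notP (e : PExp α ν) : PExp α ν
  | andP (e : PExp α ν) : PExp α ν
  | seq (e₁ e₂ : PExp α ν) : PExp α ν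
  | choice (e₁ e₂ : PExp α ν) : PExp α ν

/-- Big-step semantics of the recognition map `Rec` of a PEG with rules `R`:
`PegRec R e x r` holds iff `Rec(e,x)` is defined and equals `r`, where
`r = none` codes `FAIL` and `r = some y` codes the consumed prefix `y` of `x`. -/
inductive PegRec {α ν : Type} (R : ν → PExp α ν) :
    PExp α ν → List α → Option (List α) → Prop where
  | eps (x : List α) : PegRec R .eps x (some [])
  | fail (x : List α) : PegRec R .fail x none
  | termOk (a : α) (z : List α) : PegRec R (.term a) (a :: z) (some [a])
  | termMismatch (a b : α) (z : List α) (h : a ≠ b) : PegRec R (.term a) (b :: z) none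
  | termNil (a : α) : PegRec R (.term a) [] none
  | notFail (e : PExp α ν) (x : List α) :
      PegRec R e x none → PegRec R (.notP e) x (some [])
  | notSucc (e : PExp α ν) (x y : List α) :
      PegRec R e x (some y) → PegRec R (.notP e) x none
  | andSucc (e : PExp α ν) (x y : List α) :
      PegRec R e x (some y) → PegRec R (.andP e) x (some [])
  | andFail (e : PExp α ν) (x : List α) :
      PegRec R e x none → PegRec R (.andP e) x none
  | seqOk (e₁ e₂ : PExp α ν) (y₁ z y₂ : List α) :
      PegRec R e₁ (y₁ ++ z) (some y₁) → PegRec R e₂ z (some y₂) →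
      PegRec R (.seq e₁ e₂) (y₁ ++ z) (some (y₁ ++ y₂))
  | seqFail₁ (e₁ e₂ : PExp α ν) (x : List α) :
      PegRec R e₁ x none → PegRec R (.seq e₁ e₂) x none
  | seqFail₂ (e₁ e₂ : PExp α ν) (y₁ z : List α) :
      PegRec R e₁ (y₁ ++ z) (some y₁) → PegRec R e₂ z none →
      PegRec R (.seq e₁ e₂) (y₁ ++ z) none
  | choice₁ (e₁ e₂ : PExp α ν) (x y : List α) :
      PegRec R e₁ x (some y) → PegRec R (.choice e₁ e₂) x (some y)
  | choice₂ (e₁ e₂ : PExp α ν) (x : List α) (r : Option (List α)) :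
      PegRec R e₁ x none → PegRec R e₂ x r → PegRec R (.choice e₁ e₂) x r
  | ntRule (A : ν) (x : List α) (r : Option (List α)) :
      PegRec R (R A) x r → PegRec R (.nt A) x r

/-- A parsing expression grammar over the (finite) terminal alphabet `α`:
a finite alphabet `ν` of non-terminals, a rule for each non-terminal,
and a starting non-terminal. -/
structure PEG (α : Type) : Type 1 where
  ν : Type
  finNT : Finite ν
  R : ν → PExp α ν
  S : ν

/-- A PEG is total if its recognition map is total (defined on every expression and input). -/
def PEG.Total {α : Type} (G : PEG α) : Prop :=
  ∀ (e : PExp α G.ν) (x : List α), ∃ r, PegRec G.R e x r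

/-- The language recognised by a PEG: strings on which the starting
non-terminal succeeds and consumes the whole input. -/
def PEG.Lang {α : Type} (G : PEG α) : Set (List α) :=
  { x | PegRec G.R (.nt G.S) x (some x) }

/-- A language is in the class `PEG` iff some total parsing expression grammar recognises it. -/
def IsPEGLang {α : Type} (L : Set (List α)) : Prop :=
  ∃ G : PEG α, G.Total ∧ G.Lang = L


section Generic
variable {α ν : Type} {R : ν → PExp α ν}

theorem pegRec_det {e : PExp α ν} {x : List α} {r₁ r₂ : Option (List α)}
    (h₁ : PegRec R e x r₁) (h₂ : PegRec R e x r₂) : r₁ = r₂ := by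
  induction h₁ generalizing r₂ with
  | eps x => cases h₂; rfl
  | fail x => cases h₂; rfl
  | termOk a z =>
    cases h₂ with
    | termOk => rfl
    | termMismatch _ _ _ h => exact absurd rfl h
  | termMismatch a b z hne =>
    cases h₂ with
    | termOk => exact absurd rfl hne
    | termMismatch => rfl
  | termNil a => cases h₂; rfl
  | notFail e x h ih =>
    cases h₂ with
    | notFail => rfl
    | notSucc _ _ y h' => exact absurd (ih h') (by simp)
  | notSucc e x y h ih =>
    cases h₂ with
    | notFail _ _ h' => exact absurd (ih h') (by simp)
    | notSucc => rfl
  | andSucc e x y h ih =>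
    cases h₂ with
    | andSucc => rfl
    | andFail _ _ h' => exact absurd (ih h') (by simp)
  | andFail e x h ih =>
    cases h₂ with
    | andSucc _ _ y h' => exact absurd (ih h') (by simp)
    | andFail => rfl
  | seqOk e₁ e₂ y₁ z y₂ h1 h2 ih1 ih2 =>
    generalize hx : y₁ ++ z = x at h₂
    cases h₂ with
    | seqOk _ _ y₁' z' y₂' h1' h2' =>
      rw [← hx] at h1'
      have hy : some y₁ = some y₁' := ih1 h1'
      injection hy with hy
      subst hy
      have hz : z = z' := List.append_cancel_left hx
      subst hz
      have := ih2 h2'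
      simp_all
    | seqFail₁ _ _ _ h1' =>
      rw [← hx] at h1'
      exact absurd (ih1 h1') (by simp)
    | seqFail₂ _ _ y₁' z' h1' h2' =>
      rw [← hx] at h1'
      have hy : some y₁ = some y₁' := ih1 h1'
      injection hy with hy
      subst hy
      have hz : z = z' := List.append_cancel_left hx
      subst hz
      exact absurd (ih2 h2') (by simp)
  | seqFail₁ e₁ e₂ x h1 ih1 =>
    cases h₂ with
    | seqOk _ _ y₁' z' y₂' h1' h2' => exact absurd (ih1 h1') (by simp)
    | seqFail₁ => rfl
    | seqFail₂ _ _ y₁' z' h1' h2' => exact absurd (ih1 h1') (by simp)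
  | seqFail₂ e₁ e₂ y₁ z h1 h2 ih1 ih2 =>
    generalize hx : y₁ ++ z = x at h₂
    cases h₂ with
    | seqOk _ _ y₁' z' y₂' h1' h2' =>
      rw [← hx] at h1'
      have hy : some y₁ = some y₁' := ih1 h1'
      injection hy with hy
      subst hy
      have hz : z = z' := List.append_cancel_left hx
      subst hz
      exact absurd (ih2 h2') (by simp)
    | seqFail₁ _ _ _ h1' => rfl
    | seqFail₂ _ _ y₁' z' h1' h2' => rfl
  | choice₁ e₁ e₂ x y h ih =>
    cases h₂ with
    | choice₁ _ _ _ y' h' => exact ih h'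
    | choice₂ _ _ _ r h1' h2' => exact absurd (ih h1') (by simp)
  | choice₂ e₁ e₂ x r h1 h2 ih1 ih2 =>
    cases h₂ with
    | choice₁ _ _ _ y' h' => exact absurd (ih1 h') (by simp)
    | choice₂ _ _ _ r' h1' h2' => exact ih2 h2'
  | ntRule A x r h ih =>
    cases h₂ with
    | ntRule _ _ r' h' => exact ih h'

theorem pegRec_prefix {e : PExp α ν} {x : List α} {r : Option (List α)}
    (h : PegRec R e x r) : ∀ y, r = some y → ∃ z, x = y ++ z := by
  induction h with
  | eps x => exact fun y hy => ⟨x, by simp_all⟩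
  | fail x => simp
  | termOk a z => exact fun y hy => ⟨z, by injection hy with hy; rw [← hy]; rfl⟩
  | termMismatch => simp
  | termNil => simp
  | notFail e x h ih => exact fun y hy => ⟨x, by simp_all⟩
  | notSucc => simp
  | andSucc e x y h ih => exact fun y' hy => ⟨x, by simp_all⟩
  | andFail => simp
  | seqOk e₁ e₂ y₁ z y₂ h1 h2 ih1 ih2 =>
    intro y hy
    obtain ⟨z₂, hz₂⟩ := ih2 y₂ rfl
    injection hy with hy
    subst hy
    exact ⟨z₂, by simp [hz₂]⟩
  | seqFail₁ => simp
  | seqFail₂ => simp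
  | choice₁ e₁ e₂ x y h ih => exact ih
  | choice₂ e₁ e₂ x r h1 h2 ih1 ih2 => exact ih2
  | ntRule A x r h ih => exact ih

theorem pegRec_total_of_nt (hnt : ∀ (A : ν) (x : List α), ∃ r, PegRec R (.nt A) x r) :
    ∀ (e : PExp α ν) (x : List α), ∃ r, PegRec R e x r := by
  intro e
  induction e with
  | eps => exact fun x => ⟨_, .eps x⟩
  | fail => exact fun x => ⟨_, .fail x⟩
  | term a =>
    intro x
    match x with
    | [] => exact ⟨_, .termNil a⟩
    | b :: z =>
      by_cases hab : a = b
      · subst hab; exact ⟨_, .termOk a z⟩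
      · exact ⟨_, .termMismatch a b z hab⟩
  | nt A => exact hnt A
  | notP e ih =>
    intro x
    obtain ⟨r, hr⟩ := ih x
    match r with
    | none => exact ⟨_, .notFail e x hr⟩
    | some y => exact ⟨_, .notSucc e x y hr⟩
  | andP e ih =>
    intro x
    obtain ⟨r, hr⟩ := ih x
    match r with
    | none => exact ⟨_, .andFail e x hr⟩
    | some y => exact ⟨_, .andSucc e x y hr⟩
  | seq e₁ e₂ ih1 ih2 =>
    intro x
    obtain ⟨r₁, hr₁⟩ := ih1 x
    match r₁ with
    | none => exact ⟨_, .seqFail₁ e₁ e₂ x hr₁⟩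
    | some y₁ =>
      obtain ⟨z, hz⟩ := pegRec_prefix hr₁ y₁ rfl
      subst hz
      obtain ⟨r₂, hr₂⟩ := ih2 z
      match r₂ with
      | none => exact ⟨_, .seqFail₂ e₁ e₂ y₁ z hr₁ hr₂⟩
      | some y₂ => exact ⟨_, .seqOk e₁ e₂ y₁ z y₂ hr₁ hr₂⟩
  | choice e₁ e₂ ih1 ih2 =>
    intro x
    obtain ⟨r₁, hr₁⟩ := ih1 x
    match r₁ with
    | some y => exact ⟨_, .choice₁ e₁ e₂ x y hr₁⟩
    | none =>
      obtain ⟨r₂, hr₂⟩ := ih2 x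
      exact ⟨_, .choice₂ e₁ e₂ x r₂ hr₁ hr₂⟩

end Generic

namespace PowPEG

/-- `repE j e` is the expression `a^j e`. -/
def repE : ℕ → PExp Unit Bool → PExp Unit Bool
  | 0, e => e
  | j+1, e => .seq (.term ()) (repE j e)

/-- Rules of the grammar (for `ℓ = n+2`, `p = n+1`):
`S = true  ← a !a / a^p A !a` and `A = false ← a^p A a / &S a`. -/
def Rul (n : ℕ) : Bool → PExp Unit Bool
  | true => .choice (.seq (.term ()) (.notP (.term ())))
      (repE (n+1) (.seq (.nt false) (.notP (.term ()))))
  | false => .choice (repE (n+1) (.seq (.nt false) (.term ())))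
      (.seq (.andP (.nt true)) (.term ()))

/-- The amount consumed by the non-terminal `A` on input `a^m` (`none` = FAIL). -/
def fA (n : ℕ) : ℕ → Option ℕ := fun m =>
  if h : n + 1 ≤ m then
    match fA n (m - (n+1)) with
    | some k =>
        if k + 1 ≤ m - (n+1) then some (k + n + 2)
        else if k = m - (n+1) then some 1 else none
    | none => if m = 1 then some 1 else none
  else if m = 1 then some 1 else none
  termination_by m => m
  decreasing_by omega

/-- The result of the non-terminal `S` on input `a^m`. -/
def fS (n : ℕ) (r : ℕ) : Option ℕ :=
  if r = 1 ∨ ((n+1) ≤ r ∧ fA n (r - (n+1)) = some (r - (n+1))) then some r else none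

abbrev rep (m : ℕ) : List Unit := List.replicate m ()

theorem fA_le {n : ℕ} : ∀ m k, fA n m = some k → k ≤ m := by
  intro m
  induction m using Nat.strong_induction_on with
  | _ m ih =>
    intro k hk
    rw [fA] at hk
    split at hk
    · rename_i h
      rcases hmatch : fA n (m - (n+1)) with _ | k'
      · simp only [hmatch] at hk
        split at hk
        · injection hk with hk; omega
        · exact absurd hk (by simp)
      · simp only [hmatch] at hk
        have hk' := ih (m - (n+1)) (by omega) k' hmatch
        split at hk
        · injection hk with hk; omega
        · split at hk
          · injection hk with hk; omega
          · exact absurd hk (by simp)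
    · split at hk
      · injection hk with hk; omega
      · exact absurd hk (by simp)

theorem rep_add (a b : ℕ) : rep (a + b) = rep a ++ rep b := List.replicate_add a b ()

theorem repE_ok {R : Bool → PExp Unit Bool} {e : PExp Unit Bool} {x : List Unit}
    {r : Option (List Unit)} (j : ℕ) (h : PegRec R e x r) :
    PegRec R (repE j e) (rep j ++ x) (r.map (rep j ++ ·)) := by
  induction j with
  | zero => simpa [repE] using h
  | succ j ih =>
    have hterm : PegRec R (.term ()) (([()] : List Unit) ++ (rep j ++ x)) (some [()]) :=
      PegRec.termOk () _
    cases r with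
    | none =>
      have := PegRec.seqFail₂ (.term ()) (repE j e) [()] (rep j ++ x) hterm (by simpa using ih)
      simpa [repE, List.replicate_succ] using this
    | some y =>
      have := PegRec.seqOk (.term ()) (repE j e) [()] (rep j ++ x) (rep j ++ y) hterm
        (by simpa using ih)
      simpa [repE, List.replicate_succ] using this

theorem repE_short {R : Bool → PExp Unit Bool} {e : PExp Unit Bool} {x : List Unit}
    {j : ℕ} (h : x.length < j) : PegRec R (repE j e) x none := by
  induction j generalizing x with
  | zero => omega
  | succ j ih =>
    cases x with
    | nil => exact PegRec.seqFail₁ _ _ _ (PegRec.termNil ())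
    | cons a xs =>
      cases a
      exact PegRec.seqFail₂ (.term ()) (repE j e) [()] xs (PegRec.termOk () xs)
        (ih (by simpa using h))

theorem unit_list (x : List Unit) : x = rep x.length := by
  induction x with
  | nil => rfl
  | cons a xs ih => cases a; simpa [List.replicate_succ] using ih

theorem fA_zero {n : ℕ} : fA n 0 = none := by rw [fA]; simp

theorem pegTerm_rep {R : Bool → PExp Unit Bool} {m : ℕ} (h : 1 ≤ m) :
    PegRec R (.term ()) (rep m) (some [()]) := by
  rw [show m = (m-1)+1 by omega]
  exact PegRec.termOk () (rep (m-1))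

theorem rep_cons {m : ℕ} (h : 1 ≤ m) : rep m = ([()] : List Unit) ++ rep (m-1) := by
  conv_lhs => rw [show m = (m-1)+1 by omega]
  simp [List.replicate_succ]

theorem evalBoth (n : ℕ) : ∀ m, PegRec (Rul n) (.nt true) (rep m) ((fS n m).map rep)
    ∧ PegRec (Rul n) (.nt false) (rep m) ((fA n m).map rep) := by
  intro m
  induction m using Nat.strong_induction_on with
  | _ m ih =>
    have hS : PegRec (Rul n) (.nt true) (rep m) ((fS n m).map rep) := by
      apply PegRec.ntRule
      show PegRec (Rul n) (.choice (.seq (.term ()) (.notP (.term ())))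
        (repE (n+1) (.seq (.nt false) (.notP (.term ()))))) (rep m) _
      rcases Nat.lt_or_ge m 2 with hm2 | hm2
      · interval_cases m
        · -- m = 0
          have h1 : PegRec (Rul n) (.seq (.term ()) (.notP (.term ()))) (rep 0) none :=
            PegRec.seqFail₁ _ _ _ (PegRec.termNil ())
          have h2 : PegRec (Rul n)
              (repE (n+1) (.seq (.nt false) (.notP (.term ())))) (rep 0) none :=
            repE_short (by simp)
          have := PegRec.choice₂ _ _ _ _ h1 h2
          simpa [fS] using this
        · -- m = 1
          have hterm0 : PegRec (Rul n) (.term ()) (([()] : List Unit) ++ []) (some [()]) :=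
            PegRec.termOk () []
          have hnot : PegRec (Rul n) (.notP (.term ())) ([] : List Unit) (some []) :=
            PegRec.notFail _ _ (PegRec.termNil ())
          have h1 := PegRec.seqOk (.term ()) (.notP (.term ())) [()] [] [] hterm0 hnot
          have := PegRec.choice₁ (.seq (.term ()) (.notP (.term ())))
            (repE (n+1) (.seq (.nt false) (.notP (.term ())))) _ _ h1
          simpa [fS] using this
      · -- m ≥ 2 : first alternative fails
        have hrep1 : rep m = ([()] : List Unit) ++ rep (m-1) := rep_cons (by omega)
        have halt1 : PegRec (Rul n) (.seq (.term ()) (.notP (.term ()))) (rep m) none := by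
          rw [hrep1]
          refine PegRec.seqFail₂ (.term ()) (.notP (.term ())) [()] (rep (m-1))
            (PegRec.termOk () _) (PegRec.notSucc _ _ [()] ?_)
          exact pegTerm_rep (by omega)
        rcases Nat.lt_or_ge m (n+1) with hmp | hmp
        · -- too short for second alternative
          have h2 : PegRec (Rul n)
              (repE (n+1) (.seq (.nt false) (.notP (.term ())))) (rep m) none :=
            repE_short (by simpa using hmp)
          have := PegRec.choice₂ _ _ _ _ halt1 h2
          have hfS : fS n m = none := by simp [fS]; omega
          simpa [hfS] using this
        · -- m ≥ n+1 and m ≥ 2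
          have hA := (ih (m - (n+1)) (by omega)).2
          have hrepm : rep m = rep (n+1) ++ rep (m - (n+1)) := by
            rw [← rep_add]; congr 1; omega
          rcases hfa : fA n (m - (n+1)) with _ | k
          · -- inner A fails
            rw [hfa] at hA
            have hinner : PegRec (Rul n) (.seq (.nt false) (.notP (.term ())))
                (rep (m - (n+1))) none := PegRec.seqFail₁ _ _ _ (by simpa using hA)
            have h2 := repE_ok (n+1) hinner
            have := PegRec.choice₂ _ _ _ _ halt1 (by rw [hrepm]; simpa using h2)
            have hfS : fS n m = none := by simp [fS, hfa]; omega
            simpa [hfS] using this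
          · rw [hfa] at hA
            have hk := fA_le _ _ hfa
            rcases eq_or_lt_of_le hk with hkeq | hklt
            · -- k = m - (n+1) : full match, S succeeds
              have hnot : PegRec (Rul n) (.notP (.term ())) ([] : List Unit) (some []) :=
                PegRec.notFail _ _ (PegRec.termNil ())
              have hinner : PegRec (Rul n) (.seq (.nt false) (.notP (.term ())))
                  (rep (m - (n+1))) (some (rep (m - (n+1)))) := by
                have := PegRec.seqOk (.nt false) (.notP (.term ())) (rep (m-(n+1))) [] []
                  (by simpa [hkeq] using hA) hnot
                simpa using this
              have h2 := repE_ok (n+1) hinner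
              simp only [Option.map_some] at h2
              rw [← rep_add, show n+1+(m-(n+1)) = m by omega] at h2
              have := PegRec.choice₂ _ _ _ _ halt1 h2
              have hfS : fS n m = some m := by
                simp [fS, hfa, hkeq]
                omega
              rw [hfS]
              exact this
            · -- k < m - (n+1) : not at the end, S fails
              have hnot : PegRec (Rul n) (.notP (.term ())) (rep (m - (n+1) - k)) none := by
                exact PegRec.notSucc _ _ [()] (pegTerm_rep (by omega))
              have hinner : PegRec (Rul n) (.seq (.nt false) (.notP (.term ())))
                  (rep (m - (n+1))) none := by
                have h' : PegRec (Rul n) (.nt false)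
                    (rep k ++ rep (m - (n+1) - k)) (some (rep k)) := by
                  rw [← rep_add, show k + (m - (n+1) - k) = m - (n+1) by omega]
                  exact hA
                have := PegRec.seqFail₂ (.nt false) (.notP (.term ())) (rep k)
                  (rep (m - (n+1) - k)) h' hnot
                rw [← rep_add, show k + (m - (n+1) - k) = m - (n+1) by omega] at this
                exact this
              have h2 := repE_ok (n+1) hinner
              have := PegRec.choice₂ _ _ _ _ halt1 (by rw [hrepm]; simpa using h2)
              have hfS : fS n m = none := by
                simp [fS, hfa]
                omega
              simpa [hfS] using this
    refine ⟨hS, ?_⟩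
    -- A part
    apply PegRec.ntRule
    show PegRec (Rul n) (.choice (repE (n+1) (.seq (.nt false) (.term ())))
      (.seq (.andP (.nt true)) (.term ()))) (rep m) _
    by_cases h : n + 1 ≤ m
    · have hA' := (ih (m - (n+1)) (by omega)).2
      have hrepm : rep m = rep (n+1) ++ rep (m - (n+1)) := by
        rw [← rep_add]; congr 1; omega
      rcases hfa : fA n (m - (n+1)) with _ | k
      · -- inner A fails
        rw [hfa] at hA'
        have hinner : PegRec (Rul n) (.seq (.nt false) (.term ()))
            (rep (m - (n+1))) none := PegRec.seqFail₁ _ _ _ (by simpa using hA')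
        have h1 : PegRec (Rul n) (repE (n+1) (.seq (.nt false) (.term ())))
            (rep m) none := by
          rw [hrepm]; simpa using repE_ok (n+1) hinner
        by_cases hm1 : m = 1
        · -- base case succeeds via S
          have hfS : fS n m = some m := by simp [fS, hm1]
          rw [hfS] at hS
          simp only [Option.map_some] at hS
          have hand : PegRec (Rul n) (.andP (.nt true)) (rep m) (some []) :=
            PegRec.andSucc _ _ _ hS
          have hterm : PegRec (Rul n) (.term ()) (rep m) (some [()]) :=
            pegTerm_rep (by omega)
          have hseq := PegRec.seqOk (.andP (.nt true)) (.term ()) [] (rep m) [()]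
            (by simpa using hand) (by simpa using hterm)
          have := PegRec.choice₂ _ _ _ _ h1 (by simpa using hseq)
          have hval : fA n m = some 1 := by
            rw [fA]; simp [h, hfa, hm1, fA_zero]
          rw [hval]
          simpa using this
        · have hfS : fS n m = none := by simp [fS, hfa, hm1]
          rw [hfS] at hS
          simp only [Option.map_none] at hS
          have hand : PegRec (Rul n) (.andP (.nt true)) (rep m) none :=
            PegRec.andFail _ _ hS
          have hseq : PegRec (Rul n) (.seq (.andP (.nt true)) (.term ())) (rep m) none :=
            PegRec.seqFail₁ _ _ _ hand
          have := PegRec.choice₂ _ _ _ _ h1 hseq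
          have hval : fA n m = none := by
            rw [fA]; simp [h, hfa, hm1, fA_zero]
          rw [hval]
          simpa using this
      · rw [hfa] at hA'
        simp only [Option.map_some] at hA'
        have hk := fA_le _ _ hfa
        rcases eq_or_lt_of_le hk with hkeq | hklt
        · -- k = m - (n+1) : trailing terminal fails, base case via S
          have hA'' : PegRec (Rul n) (.nt false) (rep (m - (n+1)) ++ [])
              (some (rep (m - (n+1)))) := by simpa [hkeq] using hA'
          have hinner : PegRec (Rul n) (.seq (.nt false) (.term ()))
              (rep (m - (n+1))) none := by
            have := PegRec.seqFail₂ (.nt false) (.term ()) (rep (m - (n+1))) []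
              hA'' (PegRec.termNil ())
            simpa using this
          have h1 : PegRec (Rul n) (repE (n+1) (.seq (.nt false) (.term ())))
              (rep m) none := by
            rw [hrepm]; simpa using repE_ok (n+1) hinner
          have hfS : fS n m = some m := by
            rw [fS, if_pos (Or.inr ⟨h, by rw [hfa, hkeq]⟩)]
          rw [hfS] at hS
          simp only [Option.map_some] at hS
          have hand : PegRec (Rul n) (.andP (.nt true)) (rep m) (some []) :=
            PegRec.andSucc _ _ _ hS
          have hterm : PegRec (Rul n) (.term ()) (rep m) (some [()]) :=
            pegTerm_rep (by omega)
          have hseq := PegRec.seqOk (.andP (.nt true)) (.term ()) [] (rep m) [()]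
            (by simpa using hand) (by simpa using hterm)
          have := PegRec.choice₂ _ _ _ _ h1 (by simpa using hseq)
          have hval : fA n m = some 1 := by
            rw [fA]; simp [h, hfa, hkeq]
          rw [hval]
          simpa using this
        · -- k < m - (n+1) : first alternative succeeds
          have hA'' : PegRec (Rul n) (.nt false) (rep k ++ rep (m - (n+1) - k))
              (some (rep k)) := by
            rw [← rep_add, show k + (m - (n+1) - k) = m - (n+1) by omega]
            exact hA'
          have hterm : PegRec (Rul n) (.term ()) (rep (m - (n+1) - k)) (some [()]) :=
            pegTerm_rep (by omega)
          have hseq := PegRec.seqOk (.nt false) (.term ()) (rep k) (rep (m - (n+1) - k))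
            [()] hA'' hterm
          have hinner : PegRec (Rul n) (.seq (.nt false) (.term ()))
              (rep (m - (n+1))) (some (rep (k+1))) := by
            rw [show rep (k+1) = rep k ++ [()] from by
              rw [rep_add]; rfl]
            rw [show rep (m - (n+1)) = rep k ++ rep (m - (n+1) - k) from by
              rw [← rep_add]; congr 1; omega]
            exact hseq
          have h1 := repE_ok (n+1) hinner
          simp only [Option.map_some] at h1
          rw [← rep_add, ← rep_add, show n+1+(m-(n+1)) = m by omega] at h1
          have := PegRec.choice₁ _ (.seq (.andP (.nt true)) (.term ())) _ _ h1
          have hval : fA n m = some (k + n + 2) := by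
            rw [fA]; simp [h, hfa, show k + 1 ≤ m - (n+1) by omega]
          rw [hval]
          simp only [Option.map_some]
          rw [show n + 1 + (k + 1) = k + n + 2 by omega] at this
          exact this
    · -- m < n + 1 : first alternative too short
      have h1 : PegRec (Rul n) (repE (n+1) (.seq (.nt false) (.term ())))
          (rep m) none := repE_short (by simp; omega)
      by_cases hm1 : m = 1
      · have hfS : fS n m = some m := by simp [fS, hm1]
        rw [hfS] at hS
        simp only [Option.map_some] at hS
        have hand : PegRec (Rul n) (.andP (.nt true)) (rep m) (some []) :=
          PegRec.andSucc _ _ _ hS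
        have hterm : PegRec (Rul n) (.term ()) (rep m) (some [()]) :=
          pegTerm_rep (by omega)
        have hseq := PegRec.seqOk (.andP (.nt true)) (.term ()) [] (rep m) [()]
          (by simpa using hand) (by simpa using hterm)
        have := PegRec.choice₂ _ _ _ _ h1 (by simpa using hseq)
        have hval : fA n m = some 1 := by
          rw [fA]; simp [h, hm1, fA_zero]
        rw [hval]
        simpa using this
      · have hfS : fS n m = none := by
          simp [fS, hm1]; omega
        rw [hfS] at hS
        simp only [Option.map_none] at hS
        have hand : PegRec (Rul n) (.andP (.nt true)) (rep m) none :=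
          PegRec.andFail _ _ hS
        have hseq : PegRec (Rul n) (.seq (.andP (.nt true)) (.term ())) (rep m) none :=
          PegRec.seqFail₁ _ _ _ hand
        have := PegRec.choice₂ _ _ _ _ h1 hseq
        have hval : fA n m = none := by
          rw [fA]; simp [h, hm1, fA_zero]
        rw [hval]
        simpa using this

end PowPEG

namespace PowPEG

theorem fA_one {n : ℕ} : fA n 1 = some 1 := by
  rw [fA]; split <;> simp [fA_zero]

theorem fA_chain {n : ℕ} : ∀ k i, i + 1 ≤ (n+2)^k →
    fA n ((n+2)^k + i*(n+1)) = some (1 + i*(n+2)) := by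
  intro k
  induction k with
  | zero =>
    intro i hi
    have h0 : (n+2)^0 = 1 := pow_zero _
    have hi0 : i = 0 := by omega
    subst hi0
    rw [h0]
    simpa using fA_one
  | succ k ihk =>
    have hT : 1 ≤ (n+2)^k := Nat.one_le_pow _ _ (by omega)
    have hfull : fA n ((n+2)^(k+1) - (n+1)) = some ((n+2)^(k+1) - (n+1)) := by
      have h1 := ihk ((n+2)^k - 1) (by omega)
      have g2 : ((n+2)^k - 1)*(n+2) = ((n+2)^k - 1)*(n+1) + ((n+2)^k - 1) := by ring
      have g3 : (n+2)^(k+1) = (n+2)^k * (n+2) := pow_succ _ _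
      have g4 : (n+2)^k * (n+2) = (n+2)^k * (n+1) + (n+2)^k := by ring
      have g5 : (n+2)^k * (n+1) = ((n+2)^k - 1)*(n+1) + (n+1) := by
        rw [Nat.sub_mul]
        have := Nat.mul_le_mul_right (n+1) hT
        omega
      have key1 : (n+2)^k + ((n+2)^k - 1)*(n+1) = (n+2)^(k+1) - (n+1) := by omega
      have key2 : 1 + ((n+2)^k - 1)*(n+2) = (n+2)^(k+1) - (n+1) := by omega
      rw [key1, key2] at h1
      exact h1
    have hP : n + 2 ≤ (n+2)^(k+1) := by
      calc n + 2 = (n+2)^1 := (pow_one _).symm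
      _ ≤ (n+2)^(k+1) := Nat.pow_le_pow_right (by omega) (by omega)
    intro i
    induction i with
    | zero =>
      intro _
      rw [fA]
      rw [dif_pos (by omega : n + 1 ≤ (n+2)^(k+1) + 0*(n+1))]
      have heq : (n+2)^(k+1) + 0*(n+1) - (n+1) = (n+2)^(k+1) - (n+1) := by omega
      rw [heq, hfull]
      show (if (n+2)^(k+1) - (n+1) + 1 ≤ (n+2)^(k+1) - (n+1)
          then some ((n+2)^(k+1) - (n+1) + n + 2)
          else if (n+2)^(k+1) - (n+1) = (n+2)^(k+1) - (n+1) then some 1 else none)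
        = some (1 + 0*(n+2))
      rw [if_neg (by omega), if_pos rfl]
      simp
    | succ i ihi =>
      intro hi
      have hprev := ihi (by omega)
      rw [fA]
      rw [dif_pos (by omega : n + 1 ≤ (n+2)^(k+1) + (i+1)*(n+1))]
      have e0 : (i+1)*(n+1) = i*(n+1) + (n+1) := by ring
      have hsub : (n+2)^(k+1) + (i+1)*(n+1) - (n+1) = (n+2)^(k+1) + i*(n+1) := by omega
      rw [hsub, hprev]
      have e1 : i * (n+2) = i*(n+1) + i := by ring
      show (if 1 + i*(n+2) + 1 ≤ (n+2)^(k+1) + i*(n+1)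
          then some (1 + i*(n+2) + n + 2)
          else if 1 + i*(n+2) = (n+2)^(k+1) + i*(n+1) then some 1 else none)
        = some (1 + (i+1)*(n+2))
      rw [if_pos (by omega : 1 + i*(n+2) + 1 ≤ (n+2)^(k+1) + i*(n+1))]
      congr 1
      have e2 : (i+1)*(n+2) = i*(n+2) + (n+2) := by ring
      omega

theorem fA_full {n : ℕ} (k : ℕ) :
    fA n ((n+2)^(k+1) - (n+1)) = some ((n+2)^(k+1) - (n+1)) := by
  have hT : 1 ≤ (n+2)^k := Nat.one_le_pow _ _ (by omega)
  have h1 := fA_chain (n := n) k ((n+2)^k - 1) (by omega)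
  have g2 : ((n+2)^k - 1)*(n+2) = ((n+2)^k - 1)*(n+1) + ((n+2)^k - 1) := by ring
  have g3 : (n+2)^(k+1) = (n+2)^k * (n+2) := pow_succ _ _
  have g4 : (n+2)^k * (n+2) = (n+2)^k * (n+1) + (n+2)^k := by ring
  have g5 : (n+2)^k * (n+1) = ((n+2)^k - 1)*(n+1) + (n+1) := by
    rw [Nat.sub_mul]
    have := Nat.mul_le_mul_right (n+1) hT
    omega
  have key1 : (n+2)^k + ((n+2)^k - 1)*(n+1) = (n+2)^(k+1) - (n+1) := by omega
  have key2 : 1 + ((n+2)^k - 1)*(n+2) = (n+2)^(k+1) - (n+1) := by omega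
  rw [key1, key2] at h1
  exact h1

theorem fA_shape' {n : ℕ} : ∀ m v, fA n m = some v →
    ∃ K i, i + 1 ≤ (n+2)^K ∧ m = (n+2)^K + i*(n+1) ∧ v = 1 + i*(n+2) := by
  intro m
  induction m using Nat.strong_induction_on with
  | _ m ih =>
    intro v hv
    rw [fA] at hv
    split at hv
    · rename_i h
      rcases hfa : fA n (m - (n+1)) with _ | k
      · simp only [hfa] at hv
        split at hv
        · rename_i hm1
          injection hv with hv
          exact ⟨0, 0, by simpa using le_refl 1, by simpa using hm1, by omega⟩
        · exact absurd hv (by simp)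
      · simp only [hfa] at hv
        obtain ⟨K, i, hiK, hmK, hkK⟩ := ih (m - (n+1)) (by omega) k hfa
        split at hv
        · rename_i hcond
          injection hv with hv
          refine ⟨K, i+1, ?_, ?_, ?_⟩
          · have e1 : i * (n+2) = i*(n+1) + i := by ring
            omega
          · have e1 : (i+1)*(n+1) = i*(n+1) + (n+1) := by ring
            omega
          · have e2 : (i+1)*(n+2) = i*(n+2) + (n+2) := by ring
            omega
        · split at hv
          · rename_i hkeq
            injection hv with hv
            have e1 : i * (n+2) = i*(n+1) + i := by ring
            have hT : (n+2)^K = i + 1 := by omega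
            have hp2 : (n+2)^(K+1) = (i+1)*(n+2) := by rw [pow_succ, hT]
            have e2 : (i+1)*(n+2) = i*(n+1) + i + n + 2 := by ring
            refine ⟨K+1, 0, ?_, ?_, by omega⟩
            · have : 0 < (n+2)^(K+1) := pow_pos (by omega) _
              omega
            · omega
          · exact absurd hv (by simp)
    · split at hv
      · rename_i hm1
        injection hv with hv
        exact ⟨0, 0, by simpa using le_refl 1, by simpa using hm1, by omega⟩
      · exact absurd hv (by simp)

theorem fS_pow {n : ℕ} (k : ℕ) : fS n ((n+2)^k) = some ((n+2)^k) := by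
  cases k with
  | zero => simp [fS]
  | succ k =>
    have hP : n + 2 ≤ (n+2)^(k+1) := by
      calc n + 2 = (n+2)^1 := (pow_one _).symm
      _ ≤ (n+2)^(k+1) := Nat.pow_le_pow_right (by omega) (by omega)
    rw [fS, if_pos (Or.inr ⟨by omega, fA_full k⟩)]

theorem fS_shape {n : ℕ} {r v : ℕ} (h : fS n r = some v) : ∃ k, r = (n+2)^k := by
  rw [fS] at h
  split at h
  · rename_i hcond
    rcases hcond with h1 | ⟨hle, hfa⟩
    · exact ⟨0, by simpa using h1⟩
    · obtain ⟨K, i, hiK, hmK, hkK⟩ := fA_shape' _ _ hfa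
      have e1 : i * (n+2) = i*(n+1) + i := by ring
      have hT : (n+2)^K = i + 1 := by omega
      have hp2 : (n+2)^(K+1) = (i+1)*(n+2) := by rw [pow_succ, hT]
      have e2 : (i+1)*(n+2) = i*(n+1) + i + n + 2 := by ring
      exact ⟨K+1, by omega⟩
  · exact absurd h (by simp)

theorem fS_none_or {n m : ℕ} : fS n m = none ∨ fS n m = some m := by
  rw [fS]; split
  · right; rfl
  · left; rfl

end PowPEG

namespace PowPEG

theorem isPEG_case (n : ℕ) :
    IsPEGLang { x : List Unit | ∃ k : ℕ, x.length = (n+2) ^ k } := by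
  refine ⟨⟨Bool, inferInstance, Rul n, true⟩, ?_, ?_⟩
  · -- totality
    show ∀ (e : PExp Unit Bool) (x : List Unit), ∃ r, PegRec (Rul n) e x r
    apply pegRec_total_of_nt
    intro A x
    cases A with
    | false => exact ⟨_, by rw [unit_list x]; exact (evalBoth n x.length).2⟩
    | true => exact ⟨_, by rw [unit_list x]; exact (evalBoth n x.length).1⟩
  · ext x
    show PegRec (Rul n) (.nt true) x (some x) ↔ _
    simp only [Set.mem_setOf_eq]
    constructor
    · intro h
      rw [unit_list x] at h
      have h2 := (evalBoth n x.length).1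
      have hd := pegRec_det h h2
      rcases fS_none_or (n := n) (m := x.length) with hfs | hfs
      · rw [hfs] at hd; exact absurd hd (by simp)
      · exact fS_shape hfs
    · rintro ⟨k, hk⟩
      have h2 := (evalBoth n x.length).1
      rw [hk, fS_pow] at h2
      simp only [Option.map_some] at h2
      rw [← hk, ← unit_list x] at h2
      exact h2

/-- The grammar `S ← a !a` recognising `{a}` (the case `ℓ = 1`). -/
def Rul1 : Bool → PExp Unit Bool := fun _ => .seq (.term ()) (.notP (.term ()))

theorem rul1_eval : ∀ x : List Unit,
    PegRec Rul1 (.seq (.term ()) (.notP (.term ())))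
      x (if x.length = 1 then some x else none) := by
  intro x
  match x with
  | [] => exact PegRec.seqFail₁ _ _ _ (PegRec.termNil ())
  | [()] =>
    have := PegRec.seqOk (R := Rul1) (.term ()) (.notP (.term ())) [()] [] []
      (PegRec.termOk () []) (PegRec.notFail _ _ (PegRec.termNil ()))
    simpa using this
  | () :: () :: xs =>
    have := PegRec.seqFail₂ (R := Rul1) (.term ()) (.notP (.term ())) [()] (() :: xs)
      (PegRec.termOk () _) (PegRec.notSucc _ _ [()] (PegRec.termOk () xs))
    simpa using this

theorem isPEG_one : IsPEGLang { x : List Unit | ∃ k : ℕ, x.length = 1 ^ k } := by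
  refine ⟨⟨Bool, inferInstance, Rul1, true⟩, ?_, ?_⟩
  · show ∀ (e : PExp Unit Bool) (x : List Unit), ∃ r, PegRec Rul1 e x r
    apply pegRec_total_of_nt
    intro A x
    exact ⟨_, PegRec.ntRule A x _ (rul1_eval x)⟩
  · ext x
    show PegRec Rul1 (.nt true) x (some x) ↔ _
    simp only [Set.mem_setOf_eq, one_pow]
    constructor
    · intro h
      have h2 : PegRec Rul1 (.nt true) x (if x.length = 1 then some x else none) :=
        PegRec.ntRule _ _ _ (rul1_eval x)
      have hd := pegRec_det h h2
      by_cases hx : x.length = 1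
      · exact ⟨0, hx⟩
      · rw [if_neg hx] at hd; exact absurd hd (by simp)
    · rintro ⟨k, hk⟩
      have h2 : PegRec Rul1 (.nt true) x (if x.length = 1 then some x else none) :=
        PegRec.ntRule _ _ _ (rul1_eval x)
      rw [if_pos hk] at h2
      exact h2

/-- The grammar `S ← a !a / ε` recognising `{ε, a}` (the case `ℓ = 0`). -/
def Rul0 : Bool → PExp Unit Bool :=
  fun _ => .choice (.seq (.term ()) (.notP (.term ()))) .eps

theorem rul0_eval : ∀ x : List Unit,
    PegRec Rul0 (.choice (.seq (.term ()) (.notP (.term ()))) .eps)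
      x (if x.length = 1 then some x else some []) := by
  intro x
  match x with
  | [] => exact PegRec.choice₂ _ _ _ _ (PegRec.seqFail₁ _ _ _ (PegRec.termNil ())) (PegRec.eps [])
  | [()] =>
    have h1 := PegRec.seqOk (R := Rul0) (.term ()) (.notP (.term ())) [()] [] []
      (PegRec.termOk () []) (PegRec.notFail _ _ (PegRec.termNil ()))
    have := PegRec.choice₁ (.seq (.term ()) (.notP (.term ()))) .eps _ _ (by simpa using h1)
    simpa using this
  | () :: () :: xs =>
    have h1 := PegRec.seqFail₂ (R := Rul0) (.term ()) (.notP (.term ())) [()] (() :: xs)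
      (PegRec.termOk () _) (PegRec.notSucc _ _ [()] (PegRec.termOk () xs))
    have := PegRec.choice₂ _ .eps _ _ (by simpa using h1) (PegRec.eps (() :: () :: xs))
    simpa using this

theorem isPEG_zero : IsPEGLang { x : List Unit | ∃ k : ℕ, x.length = 0 ^ k } := by
  refine ⟨⟨Bool, inferInstance, Rul0, true⟩, ?_, ?_⟩
  · show ∀ (e : PExp Unit Bool) (x : List Unit), ∃ r, PegRec Rul0 e x r
    apply pegRec_total_of_nt
    intro A x
    exact ⟨_, PegRec.ntRule A x _ (rul0_eval x)⟩
  · ext x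
    show PegRec Rul0 (.nt true) x (some x) ↔ _
    simp only [Set.mem_setOf_eq]
    constructor
    · intro h
      have h2 : PegRec Rul0 (.nt true) x (if x.length = 1 then some x else some []) :=
        PegRec.ntRule _ _ _ (rul0_eval x)
      have hd := pegRec_det h h2
      by_cases hx : x.length = 1
      · exact ⟨0, by simpa using hx⟩
      · rw [if_neg hx] at hd
        injection hd with hd
        refine ⟨1, ?_⟩
        rw [hd]
        simp
    · rintro ⟨k, hk⟩
      have h2 : PegRec Rul0 (.nt true) x (if x.length = 1 then some x else some []) :=
        PegRec.ntRule _ _ _ (rul0_eval x)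
      cases k with
      | zero =>
        rw [pow_zero] at hk
        rw [if_pos hk] at h2
        exact h2
      | succ k =>
        rw [zero_pow (by omega : k + 1 ≠ 0)] at hk
        have hx : x = [] := List.length_eq_zero_iff.mp hk
        subst hx
        simpa using h2
end PowPEG

/-- For every natural number `ℓ`, the unary language
`P_ℓ = { a^(ℓ^n) : n ≥ 0 }` over the one-letter alphabet (`Unit`)
is recognised by some total PEG. -/
theorem powerLLength_isPEG (ℓ : ℕ) :
    IsPEGLang { x : List Unit | ∃ n : ℕ, x.length = ℓ ^ n } := by
  match ℓ with
  | 0 => exact PowPEG.isPEG_zero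
  | 1 => exact PowPEG.isPEG_one
  | (n+2) => exact PowPEG.isPEG_case n
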